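/- (Non-degeneracy of the linear frequencies, Lemma 5.2.) (i) For every c = (c₁,…,c_N) ∈ ℝ^N \ {0}, the function γ ↦ c₁Ω_{n₁}(γ) + … + c_N Ω_{n_N}(γ) is not identically zero on [γ₁,γ₂]. (ii) For every (c₀,c₁,…,c_N) ∈ ℝ^{N+1} \ {0}, the function γ ↦ c₀ + c₁Ω_{n₁}(γ) + … + c_N Ω_{n_N}(γ) is not identically zero on [γ₁,γ₂]. -/

import Mathlib

open Real

/-- `Ω_γ := γ/(1+γ)²`. -/
noncomputable def OmG (γ : ℝ) : ℝ := γ / (1 + γ) ^ 2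

/-- `κ_n(γ) := ((γ−1)/(γ+1))ⁿ`. -/
noncomputable def kap (n : ℕ) (γ : ℝ) : ℝ := ((γ - 1) / (γ + 1)) ^ n

/-- `μ_n^+(γ) := nΩ_γ − 1/2 + κ_n(γ)/2`. -/
noncomputable def muP (n : ℕ) (γ : ℝ) : ℝ := n * OmG γ - 1 / 2 + kap n γ / 2

/-- `μ_n^-(γ) := nΩ_γ − 1/2 − κ_n(γ)/2`. -/
noncomputable def muM (n : ℕ) (γ : ℝ) : ℝ := n * OmG γ - 1 / 2 - kap n γ / 2

/-- `Ω_n(γ) := √(μ_n^+(γ) μ_n^-(γ))`. -/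
noncomputable def Om (n : ℕ) (γ : ℝ) : ℝ := Real.sqrt (muP n γ * muM n γ)

open Filter Topology Set

lemma nd_analyticAt_rlog {x : ℝ} (hx : 0 < x) : AnalyticAt ℝ Real.log x := by
  have h1 : AnalyticAt ℝ (fun y : ℝ => (Complex.log (y : ℂ)).re) x := by
    exact (Complex.reCLM.analyticAt _).comp
      (((analyticAt_clog (Complex.ofReal_mem_slitPlane.2 hx)).restrictScalars).comp
      (Complex.ofRealCLM.analyticAt x))
  exact h1.congr (Filter.Eventually.of_forall fun y => Complex.log_ofReal_re y)

lemma nd_analyticAt_sqrt {x : ℝ} (hx : 0 < x) : AnalyticAt ℝ Real.sqrt x := by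
  have h1 : AnalyticAt ℝ (fun y : ℝ => Real.exp (Real.log y / 2)) x :=
    ((nd_analyticAt_rlog hx).div analyticAt_const two_ne_zero).rexp
  apply h1.congr
  filter_upwards [eventually_gt_nhds hx] with y hy
  have h2 : Real.exp (Real.log y / 2) ^ 2 = y := by
    rw [sq, ← Real.exp_add, add_halves, Real.exp_log hy]
  calc Real.exp (Real.log y / 2) = Real.sqrt (Real.exp (Real.log y / 2) ^ 2) :=
        (Real.sqrt_sq (Real.exp_pos _).le).symm
    _ = Real.sqrt y := by rw [h2]

lemma nd_analyticAt_OmG {γ : ℝ} (h : γ + 1 ≠ 0) : AnalyticAt ℝ OmG γ := by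
  have : (1 + γ) ^ 2 ≠ 0 := pow_ne_zero 2 (fun hc => h (by linarith))
  exact analyticAt_id.div ((analyticAt_const.add analyticAt_id).pow 2) this

lemma nd_analyticAt_kap (n : ℕ) {γ : ℝ} (h : γ + 1 ≠ 0) : AnalyticAt ℝ (kap n) γ :=
  ((analyticAt_id.sub analyticAt_const).div (analyticAt_id.add analyticAt_const) h).pow n

lemma nd_analyticAt_muP (n : ℕ) {γ : ℝ} (h : γ + 1 ≠ 0) : AnalyticAt ℝ (muP n) γ :=
  ((analyticAt_const.mul (nd_analyticAt_OmG h)).sub analyticAt_const).add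
    ((nd_analyticAt_kap n h).div analyticAt_const two_ne_zero)

lemma nd_analyticAt_muM (n : ℕ) {γ : ℝ} (h : γ + 1 ≠ 0) : AnalyticAt ℝ (muM n) γ :=
  ((analyticAt_const.mul (nd_analyticAt_OmG h)).sub analyticAt_const).sub
    ((nd_analyticAt_kap n h).div analyticAt_const two_ne_zero)

lemma nd_analyticAt_Om (n : ℕ) {γ : ℝ} (h : γ + 1 ≠ 0)
    (hpos : 0 < muP n γ * muM n γ) : AnalyticAt ℝ (Om n) γ := by
  have h1 : AnalyticAt ℝ (fun γ => muP n γ * muM n γ) γ :=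
    (nd_analyticAt_muP n h).mul (nd_analyticAt_muM n h)
  exact AnalyticAt.comp (f := fun γ => muP n γ * muM n γ) (nd_analyticAt_sqrt hpos) h1

lemma nd_OmG_one : OmG 1 = 1 / 4 := by norm_num [OmG]

lemma nd_kap_one {n : ℕ} (hn : n ≠ 0) : kap n 1 = 0 := by
  simp [kap, zero_pow hn]

lemma nd_muP_one {n : ℕ} (hn : n ≠ 0) : muP n 1 = (n : ℝ) / 4 - 1 / 2 := by
  rw [muP, nd_kap_one hn, nd_OmG_one]; ring

lemma nd_muM_one {n : ℕ} (hn : n ≠ 0) : muM n 1 = (n : ℝ) / 4 - 1 / 2 := by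
  rw [muM, nd_kap_one hn, nd_OmG_one]; ring

lemma nd_Om_one_at {n : ℕ} (hn : 3 ≤ n) : Om n 1 = (n : ℝ) / 4 - 1 / 2 := by
  have hn0 : n ≠ 0 := by omega
  have hl : (0:ℝ) ≤ (n : ℝ) / 4 - 1 / 2 := by
    have : (3:ℝ) ≤ (n:ℝ) := by exact_mod_cast hn
    linarith
  rw [Om, nd_muP_one hn0, nd_muM_one hn0, Real.sqrt_mul_self hl]

lemma nd_OmG_pos {γ : ℝ} (h : 0 < γ) : 0 < OmG γ := by
  have : (0:ℝ) < (1 + γ) ^ 2 := by positivity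
  exact div_pos h this

lemma nd_Om_one_eq {γ : ℝ} (h : 0 < γ) : Om 1 γ = OmG γ := by
  have h1 : γ + 1 ≠ 0 := by linarith
  have h2 : (1:ℝ) + γ ≠ 0 := by linarith
  have hprod : muP 1 γ * muM 1 γ = OmG γ ^ 2 := by
    simp only [muP, muM, kap, OmG, pow_one, Nat.cast_one, one_mul]
    field_simp
    ring
  rw [Om, hprod, Real.sqrt_sq (nd_OmG_pos h).le]

lemma nd_OmG_anti {a b : ℝ} (ha : 1 ≤ a) (hab : a ≤ b) : OmG b ≤ OmG a := by
  unfold OmG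
  rw [div_le_div_iff₀ (by nlinarith) (by nlinarith)]
  nlinarith [mul_nonneg (sub_nonneg.2 hab) (show (0:ℝ) ≤ a * b - 1 by nlinarith)]

lemma nd_kap_mono (n : ℕ) {a b : ℝ} (ha : 1 ≤ a) (hab : a ≤ b) : kap n a ≤ kap n b := by
  unfold kap
  apply pow_le_pow_left₀ (div_nonneg (by linarith) (by linarith))
  rw [div_le_div_iff₀ (by linarith) (by linarith)]
  nlinarith

lemma nd_kap_nonneg (n : ℕ) {γ : ℝ} (h : 1 ≤ γ) : 0 ≤ kap n γ :=
  pow_nonneg (div_nonneg (by linarith) (by linarith)) n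

lemma nd_muM_anti (n : ℕ) {a b : ℝ} (ha : 1 ≤ a) (hab : a ≤ b) : muM n b ≤ muM n a := by
  unfold muM
  have h1 := nd_OmG_anti ha hab
  have h2 := nd_kap_mono n ha hab
  have h3 : (n:ℝ) * OmG b ≤ (n:ℝ) * OmG a :=
    mul_le_mul_of_nonneg_left h1 (Nat.cast_nonneg n)
  linarith

lemma nd_ell_pos {n : ℕ} (hn : 3 ≤ n) : (0:ℝ) < (n : ℝ) / 4 - 1 / 2 := by
  have : (3:ℝ) ≤ (n:ℝ) := by exact_mod_cast hn
  linarith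

lemma nd_tendsto_d {n : ℕ} (hn : 3 ≤ n) :
    Tendsto (fun γ : ℝ => (Om n γ - ((n:ℝ) * OmG γ - 1/2)) / (γ - 1) ^ (2*n))
      (𝓝[≠] (1:ℝ)) (𝓝 (-((1/4:ℝ)^n / (8 * ((n:ℝ)/4 - 1/2))))) := by
  have hn0 : n ≠ 0 := by omega
  have hl := nd_ell_pos hn
  have h11 : (1:ℝ) + 1 ≠ 0 := by norm_num
  have hcM : ContinuousAt (muM n) 1 := (nd_analyticAt_muM n h11).continuousAt
  have hcP : ContinuousAt (muP n) 1 := (nd_analyticAt_muP n h11).continuousAt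
  have hprod1 : 0 < muP n 1 * muM n 1 := by
    rw [nd_muP_one hn0, nd_muM_one hn0]; positivity
  have hcOm : ContinuousAt (Om n) 1 := (nd_analyticAt_Om n h11 hprod1).continuousAt
  have hcOmG : ContinuousAt OmG 1 := (nd_analyticAt_OmG h11).continuousAt
  -- eventual positivity
  have hevM : ∀ᶠ γ in 𝓝 (1:ℝ), 0 < muM n γ := by
    have h := hcM.tendsto
    rw [nd_muM_one hn0] at h
    exact h.eventually (eventually_gt_nhds hl)
  have hevP : ∀ᶠ γ in 𝓝 (1:ℝ), 0 < muP n γ := by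
    have h := hcP.tendsto
    rw [nd_muP_one hn0] at h
    exact h.eventually (eventually_gt_nhds hl)
  have hevpos : ∀ᶠ γ in 𝓝 (1:ℝ), 0 < γ := eventually_gt_nhds one_pos
  -- limit of closed form
  set g : ℝ → ℝ := fun γ => -(1/(γ+1))^(2*n) / (4*(Om n γ + ((n:ℝ) * OmG γ - 1/2))) with hg
  have hgl : Tendsto g (𝓝 (1:ℝ))
      (𝓝 (-(1/(1+1):ℝ)^(2*n) / (4*(Om n 1 + ((n:ℝ) * OmG 1 - 1/2))))) := by
    apply Tendsto.div
    · apply Tendsto.neg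
      apply Tendsto.pow
      exact (continuousAt_const.div (continuousAt_id.add continuousAt_const) h11)
    · apply Tendsto.const_mul
      exact (hcOm.add ((continuousAt_const.mul hcOmG).sub continuousAt_const))
    · rw [nd_Om_one_at hn, nd_OmG_one]
      have hOm1 : (0:ℝ) < (n:ℝ)/4 - 1/2 + ((n:ℝ) * (1/4) - 1/2) := by linarith
      intro hc
      nlinarith
  have hval : (-(1/(1+1):ℝ)^(2*n) / (4*(Om n 1 + ((n:ℝ) * OmG 1 - 1/2))))
      = -((1/4:ℝ)^n / (8 * ((n:ℝ)/4 - 1/2))) := by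
    rw [nd_Om_one_at hn, nd_OmG_one, pow_mul]
    norm_num
    ring
  rw [hval] at hgl
  apply (hgl.mono_left nhdsWithin_le_nhds).congr'
  -- eventual equality
  filter_upwards [(hevM.filter_mono nhdsWithin_le_nhds), (hevP.filter_mono nhdsWithin_le_nhds),
    (hevpos.filter_mono nhdsWithin_le_nhds), self_mem_nhdsWithin] with γ hm hp hγ (hne : γ ≠ 1)
  have hOm2 : Om n γ ^ 2 = muP n γ * muM n γ := Real.sq_sqrt (mul_pos hp hm).le
  have hprod : muP n γ * muM n γ = ((n:ℝ) * OmG γ - 1/2)^2 - (kap n γ)^2/4 := by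
    simp only [muP, muM]; ring
  have hxpos : 0 < (n:ℝ) * OmG γ - 1/2 := by
    have h' : (n:ℝ) * OmG γ - 1/2 = (muP n γ + muM n γ)/2 := by simp only [muP, muM]; ring
    rw [h']; linarith
  have hsum : 0 < Om n γ + ((n:ℝ) * OmG γ - 1/2) := by
    have := Real.sqrt_nonneg (muP n γ * muM n γ)
    rw [Om]; linarith
  have hd : Om n γ - ((n:ℝ) * OmG γ - 1/2)
      = -(kap n γ)^2/4 / (Om n γ + ((n:ℝ) * OmG γ - 1/2)) := by
    rw [eq_div_iff hsum.ne']
    linear_combination hOm2.trans hprod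
  have ht : γ - 1 ≠ 0 := sub_ne_zero.2 hne
  have hu : γ + 1 ≠ 0 := by linarith
  have hkap : (kap n γ)^2 = (γ-1)^(2*n) * (1/(γ+1))^(2*n) := by
    rw [← mul_pow, kap, ← pow_mul, mul_comm n 2]
    congr 1
    field_simp
  simp only [hg]
  rw [hd, hkap, div_div, div_div, div_eq_div_iff
    (mul_ne_zero four_ne_zero hsum.ne')
    (mul_ne_zero four_ne_zero (mul_ne_zero hsum.ne' (pow_ne_zero _ ht)))]
  ring

lemma nd_tendsto_d_zero {n k : ℕ} (hn : 3 ≤ n) (hk : k < 2*n) :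
    Tendsto (fun γ : ℝ => (Om n γ - ((n:ℝ) * OmG γ - 1/2)) / (γ - 1) ^ k)
      (𝓝[≠] (1:ℝ)) (𝓝 0) := by
  have h := nd_tendsto_d hn
  have h2 : Tendsto (fun γ : ℝ => (γ - 1) ^ (2*n - k)) (𝓝[≠] (1:ℝ)) (𝓝 0) := by
    have hc : ContinuousAt (fun γ : ℝ => (γ - 1) ^ (2*n - k)) 1 := by fun_prop
    have hv : ((1:ℝ) - 1) ^ (2*n - k) = 0 := by
      rw [sub_self, zero_pow (by omega)]
    have := hc.tendsto.mono_left (nhdsWithin_le_nhds (s := {(1:ℝ)}ᶜ))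
    rwa [hv] at this
  have hmul := h.mul h2
  rw [mul_zero] at hmul
  apply hmul.congr'
  filter_upwards [self_mem_nhdsWithin] with γ (hne : γ ≠ 1)
  have ht : γ - 1 ≠ 0 := sub_ne_zero.2 hne
  have hsplit : (γ - 1) ^ (2*n) = (γ - 1) ^ k * (γ - 1) ^ (2*n - k) := by
    rw [← pow_add]
    congr 1
    omega
  rw [hsplit]
  field_simp

lemma nd_extraction {N : ℕ} (n : Fin N → ℕ) (hinj : Function.Injective n)
    (hrange : ∀ i, n i = 1 ∨ 3 ≤ n i) (c₀ : ℝ) (c : Fin N → ℝ)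
    (H : ∀ᶠ γ in 𝓝 (1:ℝ), c₀ + ∑ i, c i * Om (n i) γ = 0) :
    c₀ = 0 ∧ ∀ i, c i = 0 := by
  classical
  set a : Fin N → ℝ := fun i => if n i = 1 then 0 else -(1/2) with ha
  set d : Fin N → ℝ → ℝ := fun i γ => Om (n i) γ - ((n i : ℝ) * OmG γ + a i) with hd
  set A := c₀ + ∑ i, c i * a i with hA
  set B := ∑ i, c i * (n i : ℝ) with hB
  have key : ∀ γ, c₀ + ∑ i, c i * Om (n i) γ = A + B * OmG γ + ∑ i, c i * d i γ := by
    intro γ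
    have hterm : ∀ i ∈ Finset.univ, c i * Om (n i) γ
        = c i * a i + (c i * (n i:ℝ)) * OmG γ + c i * d i γ := by
      intro i _
      simp only [hd]; ring
    rw [Finset.sum_congr rfl hterm, Finset.sum_add_distrib, Finset.sum_add_distrib,
      ← Finset.sum_mul, hA, hB]
    ring
  -- d-limits
  have hd1 : ∀ i, n i = 1 → ∀ᶠ γ in 𝓝[≠] (1:ℝ), d i γ = 0 := by
    intro i h1
    have hevpos : ∀ᶠ γ in 𝓝 (1:ℝ), 0 < γ := eventually_gt_nhds one_pos
    filter_upwards [hevpos.filter_mono nhdsWithin_le_nhds] with γ hγ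
    simp only [hd, ha, h1, if_pos, Nat.cast_one, one_mul]
    rw [nd_Om_one_eq hγ]
    ring
  have hd3 : ∀ i, 3 ≤ n i → Tendsto (fun γ : ℝ => d i γ / (γ - 1) ^ (2 * n i))
      (𝓝[≠] (1:ℝ)) (𝓝 (-((1/4:ℝ)^(n i) / (8 * ((n i:ℝ)/4 - 1/2))))) := by
    intro i h3
    have hai : a i = -(1/2) := if_neg (by omega)
    have : (fun γ : ℝ => d i γ / (γ - 1) ^ (2 * n i))
        = fun γ : ℝ => (Om (n i) γ - ((n i:ℝ) * OmG γ - 1/2)) / (γ - 1) ^ (2 * n i) := by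
      funext γ; simp only [hd, hai]; ring_nf
    rw [this]
    exact nd_tendsto_d h3
  have hd3z : ∀ i, 3 ≤ n i → ∀ k, k < 2 * n i → Tendsto (fun γ : ℝ => d i γ / (γ - 1) ^ k)
      (𝓝[≠] (1:ℝ)) (𝓝 0) := by
    intro i h3 k hk
    have hai : a i = -(1/2) := if_neg (by omega)
    have : (fun γ : ℝ => d i γ / (γ - 1) ^ k)
        = fun γ : ℝ => (Om (n i) γ - ((n i:ℝ) * OmG γ - 1/2)) / (γ - 1) ^ k := by
      funext γ; simp only [hd, hai]; ring_nf
    rw [this]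
    exact nd_tendsto_d_zero h3 hk
  -- value of d at 1
  have hd10 : ∀ i, d i 1 = 0 := by
    intro i
    rcases hrange i with h1 | h3
    · simp only [hd, ha, h1, if_pos, Nat.cast_one, one_mul]
      rw [nd_Om_one_eq one_pos]
      ring
    · have hai : a i = -(1/2) := if_neg (by omega)
      simp only [hd, hai]
      rw [nd_Om_one_at h3, nd_OmG_one]
      ring
  -- step 1 : A + B/4 = 0
  have h1 : A + B * (1/4) = 0 := by
    have hH1 : c₀ + ∑ i, c i * Om (n i) 1 = 0 := H.self_of_nhds
    rw [key 1, nd_OmG_one] at hH1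
    simpa [hd10] using hH1
  -- step 2 : A = 0
  have hA0 : A = 0 := by
    have hB4 : B = -4 * A := by linarith
    have hev : ∀ᶠ γ in 𝓝[≠] (1:ℝ),
        A / (γ+1)^2 + ∑ i, c i * (d i γ / (γ-1)^2) = 0 := by
      have hevpos : ∀ᶠ γ in 𝓝 (1:ℝ), 0 < γ := eventually_gt_nhds one_pos
      filter_upwards [H.filter_mono nhdsWithin_le_nhds,
        hevpos.filter_mono nhdsWithin_le_nhds, self_mem_nhdsWithin] with γ hγ0 hγp (hne : γ ≠ 1)
      rw [key γ] at hγ0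
      have hu : γ + 1 ≠ 0 := by linarith
      have ht : γ - 1 ≠ 0 := sub_ne_zero.2 hne
      have hOmG : A + B * OmG γ = A * (γ-1)^2/(γ+1)^2 := by
        rw [hB4, OmG]; field_simp; ring
      have hS0 : ∑ i, c i * d i γ = -(A * (γ-1)^2/(γ+1)^2) := by
        rw [← hOmG]; linarith
      have hsum : ∑ i, c i * (d i γ / (γ-1)^2) = (∑ i, c i * d i γ) / (γ-1)^2 := by
        rw [Finset.sum_div]
        exact Finset.sum_congr rfl fun i _ => (mul_div_assoc _ _ _).symm
      rw [hsum, hS0]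
      field_simp
      ring
    have hlimA : Tendsto (fun γ : ℝ => A / (γ+1)^2) (𝓝[≠] (1:ℝ)) (𝓝 (A/4)) := by
      have hc : ContinuousAt (fun γ : ℝ => A / (γ+1)^2) 1 := by
        apply ContinuousAt.div continuousAt_const (by fun_prop) (by norm_num)
      have := hc.tendsto.mono_left (nhdsWithin_le_nhds (s := {(1:ℝ)}ᶜ))
      convert this using 2
      norm_num
    have hlimS : Tendsto (fun γ : ℝ => ∑ i, c i * (d i γ / (γ-1)^2)) (𝓝[≠] (1:ℝ)) (𝓝 0) := by
      have h0 : (0:ℝ) = ∑ _i : Fin N, (0:ℝ) := by simp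
      rw [h0]
      apply tendsto_finset_sum
      intro i _
      rcases hrange i with hni | hni
      · apply Tendsto.congr' _ tendsto_const_nhds
        filter_upwards [hd1 i hni] with γ hγ
        rw [hγ]
        simp
      · have := (hd3z i hni 2 (by omega)).const_mul (c i)
        simpa using this
    have := hlimA.add hlimS
    rw [add_zero] at this
    have hz : Tendsto (fun γ : ℝ => A / (γ+1)^2 + ∑ i, c i * (d i γ / (γ-1)^2))
        (𝓝[≠] (1:ℝ)) (𝓝 0) := (tendsto_congr' hev).2 tendsto_const_nhds
    have := tendsto_nhds_unique this hz
    linarith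
  have hB0 : B = 0 := by linarith
  -- step 3 : coefficients with n i ≥ 3 vanish
  have hstep3 : ∀ i, 3 ≤ n i → c i = 0 := by
    by_contra hcon
    push_neg at hcon
    obtain ⟨i0, hi0n, hi0c⟩ := hcon
    set T := Finset.univ.filter (fun j => 3 ≤ n j ∧ c j ≠ 0) with hT
    have hi0T : i0 ∈ T := by simp [hT, hi0n, hi0c]
    obtain ⟨i, hiT, hmin⟩ := T.exists_min_image n ⟨i0, hi0T⟩
    rw [hT, Finset.mem_filter] at hiT
    obtain ⟨-, hin, hic⟩ := hiT
    set v : ℝ := -((1/4:ℝ)^(n i) / (8 * ((n i:ℝ)/4 - 1/2))) with hv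
    have hvneg : v < 0 := by
      rw [hv, neg_lt, neg_zero]
      exact div_pos (by positivity) (by nlinarith [nd_ell_pos hin])
    have hev2 : ∀ᶠ γ in 𝓝[≠] (1:ℝ), ∑ j, c j * (d j γ / (γ-1)^(2 * n i)) = 0 := by
      filter_upwards [H.filter_mono nhdsWithin_le_nhds] with γ hγ0
      rw [key γ, hA0, hB0] at hγ0
      have hS0 : ∑ j, c j * d j γ = 0 := by linarith
      have hsum : ∑ j, c j * (d j γ / (γ-1)^(2 * n i)) = (∑ j, c j * d j γ) / (γ-1)^(2 * n i) := by
        rw [Finset.sum_div]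
        exact Finset.sum_congr rfl fun j _ => (mul_div_assoc _ _ _).symm
      rw [hsum, hS0, zero_div]
    have hlim2 : Tendsto (fun γ : ℝ => ∑ j, c j * (d j γ / (γ-1)^(2 * n i)))
        (𝓝[≠] (1:ℝ)) (𝓝 (∑ j, if j = i then c i * v else 0)) := by
      apply tendsto_finset_sum
      intro j _
      by_cases hji : j = i
      · subst hji
        simp only [if_pos rfl]
        exact (hd3 j hin).const_mul (c j)
      · simp only [if_neg hji]
        by_cases hcj : c j = 0
        · apply Tendsto.congr' _ tendsto_const_nhds
          filter_upwards with γ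
          rw [hcj]
          simp
        · rcases hrange j with hnj | hnj
          · apply Tendsto.congr' _ tendsto_const_nhds
            filter_upwards [hd1 j hnj] with γ hγ
            rw [hγ]
            simp
          · have hjT : j ∈ T := by simp [hT, hnj, hcj]
            have hle : n i ≤ n j := hmin j hjT
            have hlt : n i < n j := lt_of_le_of_ne hle (fun h => hji (hinj h.symm))
            have := (hd3z j hnj (2 * n i) (by omega)).const_mul (c j)
            simpa using this
    have hsumv : (∑ j, if j = i then c i * v else 0) = c i * v := by
      simp [Finset.sum_ite_eq']
    rw [hsumv] at hlim2
    have hz2 : Tendsto (fun γ : ℝ => ∑ j, c j * (d j γ / (γ-1)^(2 * n i)))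
        (𝓝[≠] (1:ℝ)) (𝓝 0) := (tendsto_congr' hev2).2 tendsto_const_nhds
    have := tendsto_nhds_unique hlim2 hz2
    exact hic (by
      have := mul_eq_zero.1 this
      rcases this with h | h
      · exact h
      · exact absurd h hvneg.ne)
  -- step 4 : all coefficients vanish
  have hcall : ∀ i, c i = 0 := by
    intro i
    rcases hrange i with h1 | h3
    · have hsingle : B = c i := by
        rw [hB]
        rw [Finset.sum_eq_single i]
        · rw [h1, Nat.cast_one, mul_one]
        · intro j _ hji
          rcases hrange j with hj1 | hj3
          · exact absurd (hinj (hj1.trans h1.symm)) hji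
          · rw [hstep3 j hj3, zero_mul]
        · intro h
          exact absurd (Finset.mem_univ i) h
      rw [← hsingle, hB0]
    · exact hstep3 i h3
  refine ⟨?_, hcall⟩
  have : ∑ i, c i * a i = 0 := by
    apply Finset.sum_eq_zero
    intro i _
    rw [hcall i, zero_mul]
  rw [hA, this, add_zero] at hA0
  exact hA0

lemma nd_prod_one_pos {γ : ℝ} (h : 0 < γ) : 0 < muP 1 γ * muM 1 γ := by
  have h2 : (1:ℝ) + γ ≠ 0 := by linarith
  have h1 : γ + 1 ≠ 0 := by linarith
  have hprod : muP 1 γ * muM 1 γ = OmG γ ^ 2 := by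
    simp only [muP, muM, kap, OmG, pow_one, Nat.cast_one, one_mul]
    field_simp
    ring
  rw [hprod]
  exact pow_pos (nd_OmG_pos h) 2

/-- Non-degeneracy of the linear frequencies (Lemma 5.2). -/
theorem nondegeneracy
    (N : ℕ) (hN : 1 ≤ N)
    (n : Fin N → ℕ) (hmono : StrictMono n) (hrange : ∀ i, n i = 1 ∨ 3 ≤ n i)
    (γ₁ γ₂ : ℝ) (hγ₁ : 1 < γ₁) (hγ₁₂ : γ₁ < γ₂)
    (hmu : ∀ i, 3 ≤ n i → ∀ γ ∈ Set.Icc γ₁ γ₂, 0 < muM (n i) γ) :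
    -- (i)
    (∀ c : Fin N → ℝ, c ≠ 0 →
      ∃ γ ∈ Set.Icc γ₁ γ₂, (∑ i, c i * Om (n i) γ) ≠ 0) ∧
    -- (ii)
    (∀ (c₀ : ℝ) (c : Fin N → ℝ), ¬(c₀ = 0 ∧ c = 0) →
      ∃ γ ∈ Set.Icc γ₁ γ₂, c₀ + ∑ i, c i * Om (n i) γ ≠ 0) := by

  have main : ∀ (c₀ : ℝ) (c : Fin N → ℝ),
      (∀ γ ∈ Set.Icc γ₁ γ₂, c₀ + ∑ i, c i * Om (n i) γ = 0) → c₀ = 0 ∧ c = 0 := by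
    intro c₀ c hz
    set V : Fin N → Set ℝ :=
      fun i => Set.Ioi (0:ℝ) ∩ (fun γ => muP (n i) γ * muM (n i) γ) ⁻¹' Set.Ioi 0 with hV
    have hVopen : ∀ i, IsOpen (V i) := by
      intro i
      apply ContinuousOn.isOpen_inter_preimage ?_ isOpen_Ioi isOpen_Ioi
      intro γ hγ
      have hu : γ + 1 ≠ 0 := by
        have : (0:ℝ) < γ := hγ
        linarith
      exact ((nd_analyticAt_muP (n i) hu).mul
        (nd_analyticAt_muM (n i) hu)).continuousAt.continuousWithinAt
    set W : Set ℝ := Set.Ioi (0:ℝ) ∩ ⋂ i, V i with hW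
    have hWopen : IsOpen W := isOpen_Ioi.inter (isOpen_iInter_of_finite hVopen)
    have hWsub : Set.Ico (1:ℝ) γ₂ ⊆ W := by
      intro γ hγ
      have hγ1 : (1:ℝ) ≤ γ := hγ.1
      have hγpos : (0:ℝ) < γ := lt_of_lt_of_le one_pos hγ1
      refine ⟨hγpos, Set.mem_iInter.2 fun i => ⟨hγpos, ?_⟩⟩
      rcases hrange i with h1 | h3
      · rw [h1]
        exact nd_prod_one_pos hγpos
      · have hM2 : 0 < muM (n i) γ₂ := hmu i h3 γ₂ ⟨hγ₁₂.le, le_refl γ₂⟩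
        have hM : 0 < muM (n i) γ := lt_of_lt_of_le hM2 (nd_muM_anti (n i) hγ1 hγ.2.le)
        have hPM : muP (n i) γ = muM (n i) γ + kap (n i) γ := by
          simp only [muP, muM]; ring
        have hP : 0 < muP (n i) γ := by
          have := nd_kap_nonneg (n i) hγ1
          rw [hPM]; linarith
        exact mul_pos hP hM
    have h1γ₂ : (1:ℝ) < γ₂ := lt_trans hγ₁ hγ₁₂
    have h1W : (1:ℝ) ∈ W := hWsub ⟨le_refl 1, h1γ₂⟩
    obtain ⟨ε, hε, hball⟩ := Metric.isOpen_iff.1 hWopen 1 h1W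
    rw [Real.ball_eq_Ioo] at hball
    set U : Set ℝ := Set.Ioo (1-ε) γ₂ with hU
    have hUW : U ⊆ W := by
      intro γ hγ
      rcases le_or_gt 1 γ with h | h
      · exact hWsub ⟨h, hγ.2⟩
      · exact hball ⟨hγ.1, by linarith⟩
    have hUopen : IsOpen U := isOpen_Ioo
    have hUconn : IsPreconnected U := isPreconnected_Ioo
    have h1U : (1:ℝ) ∈ U := ⟨by linarith, h1γ₂⟩
    have hγ₁U : γ₁ ∈ U := ⟨by linarith, hγ₁₂⟩
    set F : ℝ → ℝ := fun γ => c₀ + ∑ i, c i * Om (n i) γ with hF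
    have hFanal : AnalyticOnNhd ℝ F U := by
      intro γ hγ
      have hγW := hUW hγ
      have hγpos : (0:ℝ) < γ := hγW.1
      have hu : γ + 1 ≠ 0 := by linarith
      apply analyticAt_const.add
      apply Finset.analyticAt_fun_sum
      intro i _
      have hprod : 0 < muP (n i) γ * muM (n i) γ := by
        have := Set.mem_iInter.1 hγW.2 i
        exact this.2
      exact analyticAt_const.mul (nd_analyticAt_Om (n i) hu hprod)
    have hfreq : ∃ᶠ z in 𝓝[≠] γ₁, F z = 0 := by
      have hz_icc : ∀ z ∈ Set.Icc γ₁ γ₂, F z = 0 := hz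
      have hIoc : Set.Ioc γ₁ γ₂ ∈ 𝓝[>] γ₁ := Ioc_mem_nhdsGT hγ₁₂
      have hev : ∀ᶠ z in 𝓝[>] γ₁, F z = 0 :=
        Filter.eventually_of_mem hIoc (fun z hz => hz_icc z ⟨hz.1.le, hz.2⟩)
      exact hev.frequently.filter_mono
        (nhdsWithin_mono γ₁ (fun z (hz : γ₁ < z) => (ne_of_gt hz : z ≠ γ₁)))
    have hEq : Set.EqOn F 0 U :=
      hFanal.eqOn_zero_of_preconnected_of_frequently_eq_zero hUconn hγ₁U hfreq
    have H : ∀ᶠ γ in 𝓝 (1:ℝ), c₀ + ∑ i, c i * Om (n i) γ = 0 := by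
      filter_upwards [hUopen.mem_nhds h1U] with γ hγ
      exact hEq hγ
    obtain ⟨h0, hcoef⟩ := nd_extraction n hmono.injective hrange c₀ c H
    exact ⟨h0, funext hcoef⟩
  constructor
  · intro c hc
    by_contra hcon
    push_neg at hcon
    have := main 0 c (fun γ hγ => by rw [zero_add]; exact hcon γ hγ)
    exact hc this.2
  · intro c₀ c hc
    by_contra hcon
    push_neg at hcon
    exact hc (main c₀ c hcon)
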